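/- Let (G_1,…,G_n) be fixed graphs on a vertex set V of size n, let χ:[n]→[n] be any map, let p' ∈ [0,1], and let H_0, H_1, …, H_n be independent random graphs on V, each sampled from G(n,p'). Then the probability that (G_1 ∪ H_0, …, G_n ∪ H_0) contains a χ-colored Hamilton cycle is at most the probability that (G_1 ∪ H_1, …, G_n ∪ H_n) contains a χ-colored Hamilton cycle. -/

import Mathlib

open MeasureTheory

/-- The Bernoulli measure on `Bool` with success probability `p` (a real number,
clamped into `[0,1]`; for `p ∈ [0,1]` this is the genuine Bernoulli measure). -/
noncomputable def bernoulliMeasure (p : ℝ) : Measure Bool :=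
  (PMF.bernoulli (min (Real.toNNReal p) 1) (min_le_right _ _)).toMeasure

/-- The Erdős–Rényi measure `G(n,p)`. -/
noncomputable def erMeasure (n : ℕ) (p : ℝ) : Measure (Sym2 (Fin n) → Bool) :=
  Measure.pi fun _ => bernoulliMeasure p

/-- The product measure for an `ι`-indexed tuple of independent samples from `G(n,p)`. -/
noncomputable def erTupleMeasure (ι : Type*) [Fintype ι] (n : ℕ) (p : ℝ) :
    Measure (ι → Sym2 (Fin n) → Bool) :=
  Measure.pi fun _ => erMeasure n p

/-- The simple graph on `Fin n` determined by an outcome `f : Sym2 (Fin n) → Bool`. -/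
def graphOf {n : ℕ} (f : Sym2 (Fin n) → Bool) : SimpleGraph (Fin n) :=
  SimpleGraph.fromEdgeSet {e | f e = true}

/-- `(G_1, …, G_n)` has a `χ`-colored Hamilton cycle. -/
def HasChiHamCycle (n : ℕ) (G : Fin n → SimpleGraph (Fin n)) (χ : Fin n → Fin n) : Prop :=
  3 ≤ n ∧ ∃ v : Fin n ≃ Fin n, ∀ i : Fin n, (G (χ i)).Adj (v i) (v (finRotate n i))

namespace S9

open Function ENNReal
open scoped Classical

/- ### The abstract "splitting one shared coordinate" step -/

section Step
variable {ι : Type*} [Fintype ι] [DecidableEq ι]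

/-- Explicit equivalence splitting off two coordinates. -/
noncomputable def splitEquiv (a b : ι) (hab : a ≠ b) :
    ({i : ι // i ≠ a ∧ i ≠ b} → Bool) × Bool × Bool ≃ (ι → Bool) where
  toFun x i := if h1 : i = a then x.2.1 else if h2 : i = b then x.2.2 else x.1 ⟨i, h1, h2⟩
  invFun f := (fun i => f i.1, f a, f b)
  left_inv x := by
    obtain ⟨g, u, v⟩ := x
    simp only [Prod.mk.injEq]
    refine ⟨?_, by simp, by simp [hab.symm]⟩
    funext i
    rcases i with ⟨i, h1, h2⟩
    simp [h1, h2]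
  right_inv f := by
    funext i
    by_cases h1 : i = a
    · simp [h1]
    · by_cases h2 : i = b <;> simp [h1, h2, hab.symm]

theorem step_lemma (B : Bool → ℝ≥0∞) (P : (ι → Bool) → Prop) [DecidablePred P]
    (a b : ι) (hab : a ≠ b)
    (hmono : ∀ f g : ι → Bool, (∀ i, f i = true → g i = true) → P f → P g)
    (hsplit : ∀ f, P f → P (update f a false) ∨ P (update f b false)) :
    (∑ f : ι → Bool, if P (update f b (f a)) then ∏ i, B (f i) else 0) ≤
      ∑ f : ι → Bool, if P f then ∏ i, B (f i) else 0 := by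
  classical
  set E := splitEquiv a b hab with hE
  have hEa : ∀ g u v, E (g, u, v) a = u := fun g u v => by simp [hE, splitEquiv]
  have hEb : ∀ g u v, E (g, u, v) b = v := fun g u v => by simp [hE, splitEquiv, hab.symm]
  have hEo : ∀ g u v (i : ι) (h1 : i ≠ a) (h2 : i ≠ b), E (g, u, v) i = g ⟨i, h1, h2⟩ := by
    intro g u v i h1 h2; simp [hE, splitEquiv, h1, h2]
  have hupdb : ∀ g u v v', update (E (g, u, v)) b v' = E (g, u, v') := by
    intro g u v v'
    funext i
    by_cases h1 : i = a
    · subst h1; rw [update_of_ne hab, hEa, hEa]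
    · by_cases h2 : i = b
      · subst h2; rw [update_self, hEb]
      · rw [update_of_ne h2, hEo _ _ _ _ h1 h2, hEo _ _ _ _ h1 h2]
  have hupda : ∀ g u v u', update (E (g, u, v)) a u' = E (g, u', v) := by
    intro g u v u'
    funext i
    by_cases h1 : i = a
    · subst h1; rw [update_self, hEa]
    · rw [update_of_ne h1]
      by_cases h2 : i = b
      · subst h2; rw [hEb, hEb]
      · rw [hEo _ _ _ _ h1 h2, hEo _ _ _ _ h1 h2]
  have hmono' : ∀ g u v, P (E (g, false, false)) → P (E (g, u, v)) := by
    intro g u v h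
    refine hmono _ _ (fun i => ?_) h
    by_cases h1 : i = a
    · subst h1; rw [hEa]; simp
    · by_cases h2 : i = b
      · subst h2; rw [hEb]; simp
      · rw [hEo _ _ _ _ h1 h2, hEo _ _ _ _ h1 h2]; exact id
  have hprod : ∀ g u v, (∏ i, B (E (g, u, v) i)) =
      B u * B v * ∏ i : {i : ι // i ≠ a ∧ i ≠ b}, B (g i) := by
    intro g u v
    have ha : a ∈ Finset.univ := Finset.mem_univ a
    have hb : b ∈ Finset.univ.erase a := by
      simp [Finset.mem_erase, hab.symm]
    rw [← Finset.mul_prod_erase _ _ ha, ← Finset.mul_prod_erase _ _ hb, hEa, hEb, ← mul_assoc]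
    congr 1
    rw [Finset.prod_subtype ((Finset.univ.erase a).erase b)
      (p := fun i => i ≠ a ∧ i ≠ b) (by intro x; simp [Finset.mem_erase, and_comm])]
    apply Finset.prod_congr rfl
    intro x _
    rcases x with ⟨x, h1, h2⟩
    rw [hEo _ _ _ _ h1 h2]
  rw [← Equiv.sum_comp E (fun f => if P (update f b (f a)) then ∏ i, B (f i) else 0),
      ← Equiv.sum_comp E (fun f => if P f then ∏ i, B (f i) else 0)]
  rw [Fintype.sum_prod_type, Fintype.sum_prod_type]
  apply Finset.sum_le_sum
  intro g _
  simp only [Fintype.sum_prod_type, hEa, hupdb, hprod, Fintype.sum_bool]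
  set C := ∏ i : {i : ι // i ≠ a ∧ i ≠ b}, B (g i) with hC
  by_cases hff : P (E (g, false, false))
  · have h1 := hmono' g true true hff
    have h2 := hmono' g true false hff
    have h3 := hmono' g false true hff
    simp [hff, h1, h2, h3]
  · by_cases htt : P (E (g, true, true))
    · have hLHS : ((if P (E (g, true, true)) then B true * B true * C else 0) +
          (if P (E (g, true, true)) then B true * B false * C else 0)) +
          ((if P (E (g, false, false)) then B false * B true * C else 0) +
          (if P (E (g, false, false)) then B false * B false * C else 0)) =
          B true * B true * C + B true * B false * C := by
        simp [hff, htt]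
      rw [hLHS]
      rcases hsplit (E (g, true, true)) htt with hs | hs
      · rw [hupda] at hs
        have hcomm : B true * B false * C = B false * B true * C := by ring
        calc B true * B true * C + B true * B false * C
            = (if P (E (g, true, true)) then B true * B true * C else 0) +
              (if P (E (g, false, true)) then B false * B true * C else 0) := by
              rw [if_pos htt, if_pos hs, hcomm]
          _ ≤ _ := by
              refine add_le_add ?_ ?_
              · exact le_add_right le_rfl
              · exact le_add_right le_rfl
      · rw [hupdb] at hs
        calc B true * B true * C + B true * B false * C
            = (if P (E (g, true, true)) then B true * B true * C else 0) +
              (if P (E (g, true, false)) then B true * B false * C else 0) := by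
              rw [if_pos htt, if_pos hs]
          _ ≤ _ := le_add_right le_rfl
    · simp [hff, htt]

end Step

/- ### arithmetic helpers -/

lemma aux1 (N k : ℕ) (h3 : 3 ≤ N) (hk : k < N) : (k + 1) % N ≠ k := by
  rcases Nat.lt_or_ge (k + 1) N with h | h
  · rw [Nat.mod_eq_of_lt h]; omega
  · have h' : k + 1 = N := by omega
    rw [h', Nat.mod_self]; omega

lemma aux2 (N k : ℕ) (h3 : 3 ≤ N) (hk : k < N) : ((k + 1) % N + 1) % N ≠ k := by
  rcases Nat.lt_or_ge (k + 1) N with h | h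
  · rw [Nat.mod_eq_of_lt h]
    rcases Nat.lt_or_ge (k + 1 + 1) N with h2 | h2
    · rw [Nat.mod_eq_of_lt h2]; omega
    · have h' : k + 1 + 1 = N := by omega
      rw [h', Nat.mod_self]; omega
  · have h' : k + 1 = N := by omega
    rw [h', Nat.mod_self, Nat.mod_eq_of_lt (by omega)]; omega

lemma rot_ne {n : ℕ} (hn : 3 ≤ n) (i : Fin n) : finRotate n i ≠ i := by
  obtain ⟨m, rfl⟩ : ∃ m, n = m + 3 := ⟨n - 3, by omega⟩
  rw [finRotate_succ_apply]
  intro h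
  have hv := congrArg Fin.val h
  rw [Fin.val_add, Fin.val_one] at hv
  exact aux1 (m + 3) i.val (by omega) i.isLt hv

lemma rot_rot_ne {n : ℕ} (hn : 3 ≤ n) (i : Fin n) :
    finRotate n (finRotate n i) ≠ i := by
  obtain ⟨m, rfl⟩ : ∃ m, n = m + 3 := ⟨n - 3, by omega⟩
  rw [finRotate_succ_apply, finRotate_succ_apply]
  intro h
  have hv := congrArg Fin.val h
  rw [Fin.val_add, Fin.val_add, Fin.val_one] at hv
  exact aux2 (m + 3) i.val (by omega) i.isLt hv

lemma edge_inj {n : ℕ} (hn : 3 ≤ n) (v : Fin n ≃ Fin n) (i j : Fin n)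
    (h : s(v i, v (finRotate n i)) = s(v j, v (finRotate n j))) : i = j := by
  rw [Sym2.eq_iff] at h
  rcases h with ⟨h1, _⟩ | ⟨h1, h2⟩
  · exact v.injective h1
  · exfalso
    have hij : i = finRotate n j := v.injective h1
    have hji : finRotate n i = j := v.injective h2
    apply rot_rot_ne hn j
    rw [← hij]
    exact hji

/- ### the interpolating events -/

variable {n : ℕ} (G : Fin n → SimpleGraph (Fin n)) (χ : Fin n → Fin n)

def srcOf (τ : Fin n → Sym2 (Fin n) → Bool) (c : Fin n) (e : Sym2 (Fin n)) :
    Option (Fin n) := if τ c e then some c else none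

def Pt (τ : Fin n → Sym2 (Fin n) → Bool)
    (ω : Option (Fin n) → Sym2 (Fin n) → Bool) : Prop :=
  HasChiHamCycle n (fun i => G i ⊔ graphOf (fun e => ω (srcOf τ i e) e)) χ

lemma Pt_iff (τ : Fin n → Sym2 (Fin n) → Bool)
    (ω : Option (Fin n) → Sym2 (Fin n) → Bool) :
    Pt G χ τ ω ↔ 3 ≤ n ∧ ∃ v : Fin n ≃ Fin n, ∀ i : Fin n,
      (G (χ i)).Adj (v i) (v (finRotate n i)) ∨
        ω (srcOf τ (χ i) s(v i, v (finRotate n i))) s(v i, v (finRotate n i)) = true := by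
  unfold Pt HasChiHamCycle
  apply and_congr_right
  intro hn
  apply exists_congr; intro v
  apply forall_congr'; intro i
  have hne : v i ≠ v (finRotate n i) := by
    intro hEq
    exact (rot_ne hn i) (v.injective hEq).symm
  simp only [SimpleGraph.sup_adj, graphOf, SimpleGraph.fromEdgeSet_adj, Set.mem_setOf_eq]
  constructor
  · rintro (h | ⟨h, -⟩)
    · exact Or.inl h
    · exact Or.inr h
  · rintro (h | h)
    · exact Or.inl h
    · exact Or.inr ⟨h, hne⟩

lemma Pt_mono (τ : Fin n → Sym2 (Fin n) → Bool)
    (ω ω' : Option (Fin n) → Sym2 (Fin n) → Bool)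
    (h : ∀ o e, ω o e = true → ω' o e = true) : Pt G χ τ ω → Pt G χ τ ω' := by
  rw [Pt_iff, Pt_iff]
  rintro ⟨hn, v, hv⟩
  exact ⟨hn, v, fun i => (hv i).imp id (h _ _)⟩

lemma Pt_split (τ : Fin n → Sym2 (Fin n) → Bool) (c₀ : Fin n) (e₀ : Sym2 (Fin n))
    (f : Option (Fin n) × Sym2 (Fin n) → Bool)
    (hP : Pt G χ τ (fun o e => f (o, e))) :
    Pt G χ τ (fun o e => update f (none, e₀) false (o, e)) ∨
      Pt G χ τ (fun o e => update f (some c₀, e₀) false (o, e)) := by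
  classical
  rw [Pt_iff] at hP
  obtain ⟨hn, v, hv⟩ := hP
  set rp : Fin n → Option (Fin n) × Sym2 (Fin n) := fun i =>
    (srcOf τ (χ i) s(v i, v (finRotate n i)), s(v i, v (finRotate n i))) with hrp
  have hab : ((none : Option (Fin n)), e₀) ≠ (some c₀, e₀) := by simp
  by_cases hb : ∃ j, rp j = (some c₀, e₀)
  · left
    rw [Pt_iff]
    refine ⟨hn, v, fun i => ?_⟩
    rcases hv i with h | h
    · exact Or.inl h
    · right
      have hne : rp i ≠ ((none : Option (Fin n)), e₀) := by
        intro hi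
        obtain ⟨j, hj⟩ := hb
        have hij : i = j := by
          apply edge_inj hn v
          have h1 : s(v i, v (finRotate n i)) = e₀ := congrArg Prod.snd hi
          have h2 : s(v j, v (finRotate n j)) = e₀ := congrArg Prod.snd hj
          rw [h1, h2]
        rw [hij, hj] at hi
        exact hab hi.symm
      show update f ((none : Option (Fin n)), e₀) false (rp i) = true
      rw [update_of_ne hne]
      exact h
  · right
    rw [Pt_iff]
    push_neg at hb
    refine ⟨hn, v, fun i => ?_⟩
    rcases hv i with h | h
    · exact Or.inl h
    · right
      show update f (some c₀, e₀) false (rp i) = true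
      rw [update_of_ne (hb i)]
      exact h

def tfin (T : Finset (Fin n × Sym2 (Fin n))) : Fin n → Sym2 (Fin n) → Bool :=
  fun c e => decide ((c, e) ∈ T)

lemma Pt_transfer (T : Finset (Fin n × Sym2 (Fin n))) (c₀ : Fin n) (e₀ : Sym2 (Fin n))
    (hT : (c₀, e₀) ∉ T) (f : Option (Fin n) × Sym2 (Fin n) → Bool) :
    Pt G χ (tfin T) (fun o e => f (o, e)) ↔
      Pt G χ (tfin (insert (c₀, e₀) T))
        (fun o e => update f (some c₀, e₀) (f (none, e₀)) (o, e)) := by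
  rw [Pt_iff, Pt_iff]
  apply and_congr_right; intro hn
  apply exists_congr; intro v
  apply forall_congr'; intro i
  apply or_congr_right
  set e := s(v i, v (finRotate n i)) with he
  by_cases hce : (χ i, e) = (c₀, e₀)
  · have hc : χ i = c₀ := congrArg Prod.fst hce
    have heq : e = e₀ := congrArg Prod.snd hce
    have h1 : tfin T (χ i) e = false := by
      simp only [tfin, decide_eq_false_iff_not]
      rw [hce]; exact hT
    have h2 : tfin (insert (c₀, e₀) T) (χ i) e = true := by
      simp only [tfin, decide_eq_true_eq]
      rw [hce]; exact Finset.mem_insert_self _ _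
    rw [srcOf, srcOf, h1, h2]
    rw [if_neg (by simp : ¬(false = true)), if_pos rfl]
    rw [hc, heq, update_self]
  · have h1 : tfin (insert (c₀, e₀) T) (χ i) e = tfin T (χ i) e := by
      simp only [tfin, Finset.mem_insert, decide_eq_decide]
      exact or_iff_right hce
    rw [srcOf, srcOf, h1]
    have hne : ((if tfin T (χ i) e then some (χ i) else none), e) ≠ (some c₀, e₀) := by
      intro hEq
      have hfst := congrArg Prod.fst hEq
      have hsnd : e = e₀ := congrArg Prod.snd hEq
      by_cases ht : tfin T (χ i) e
      · rw [if_pos ht] at hfst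
        apply hce
        rw [Option.some_inj.mp hfst, hsnd]
      · rw [if_neg ht] at hfst
        exact Option.some_ne_none c₀ (show (none : Option (Fin n)) = some c₀ from hfst).symm
    rw [update_of_ne hne]

/- ### the weighted-sum form of the measure -/

noncomputable def BW (p : ℝ) (b : Bool) : ℝ≥0∞ := bernoulliMeasure p {b}

instance (p : ℝ) : IsProbabilityMeasure (bernoulliMeasure p) := by
  unfold bernoulliMeasure; infer_instance

instance (n : ℕ) (p : ℝ) : IsProbabilityMeasure (erMeasure n p) := by
  unfold erMeasure; infer_instance

lemma erTuple_singleton (p : ℝ) (ω : Option (Fin n) → Sym2 (Fin n) → Bool) :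
    erTupleMeasure (Option (Fin n)) n p {ω} = ∏ o, ∏ e, BW p (ω o e) := by
  rw [← Set.univ_pi_singleton ω, erTupleMeasure, Measure.pi_pi]
  refine Finset.prod_congr rfl fun o _ => ?_
  rw [← Set.univ_pi_singleton (ω o), erMeasure, Measure.pi_pi]
  rfl

lemma erTuple_apply (p : ℝ) (S : Set (Option (Fin n) → Sym2 (Fin n) → Bool)) :
    erTupleMeasure (Option (Fin n)) n p S =
      ∑ ω : Option (Fin n) → Sym2 (Fin n) → Bool,
        if ω ∈ S then ∏ o, ∏ e, BW p (ω o e) else 0 := by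
  classical
  have hS : S = ⋃ ω ∈ (Set.toFinite S).toFinset, {ω} := by
    ext x
    simp only [Set.mem_iUnion, Set.Finite.mem_toFinset, Set.mem_singleton_iff]
    exact ⟨fun h => ⟨x, h, rfl⟩, fun ⟨y, hy, hxy⟩ => hxy ▸ hy⟩
  nth_rewrite 1 [hS]
  rw [measure_biUnion_finset]
  · have ht : (Set.toFinite S).toFinset = Finset.univ.filter (· ∈ S) := by
      ext x
      simp only [Set.Finite.mem_toFinset, Finset.mem_filter, Finset.mem_univ, true_and]
    rw [ht, Finset.sum_filter]
    refine Finset.sum_congr rfl fun x _ => ?_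
    exact if_congr Iff.rfl (erTuple_singleton p x) rfl
  · intro x _ y _ hxy
    simp [Set.disjoint_singleton, hxy]
  · intro ω _
    exact measurableSet_singleton ω

/- ### the chain -/

noncomputable def SumT (p : ℝ) (τ : Fin n → Sym2 (Fin n) → Bool) : ℝ≥0∞ :=
  ∑ f : Option (Fin n) × Sym2 (Fin n) → Bool,
    if Pt G χ τ (fun o e => f (o, e)) then ∏ κ, BW p (f κ) else 0

lemma chain (p : ℝ) (T : Finset (Fin n × Sym2 (Fin n))) :
    SumT G χ p (tfin (∅ : Finset (Fin n × Sym2 (Fin n)))) ≤ SumT G χ p (tfin T) := by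
  classical
  induction T using Finset.induction_on with
  | empty => exact le_rfl
  | @insert a T haT ih =>
      refine le_trans ih ?_
      obtain ⟨c₀, e₀⟩ := a
      have hstep := step_lemma (BW p)
        (fun f => Pt G χ (tfin (insert (c₀, e₀) T)) (fun o e => f (o, e)))
        ((none : Option (Fin n)), e₀) (some c₀, e₀) (by simp)
        (fun f g h => Pt_mono G χ _ _ _ (fun o e => h (o, e)))
        (fun f hf => Pt_split G χ _ c₀ e₀ f hf)
      calc SumT G χ p (tfin T)
          = ∑ f : Option (Fin n) × Sym2 (Fin n) → Bool,
              if Pt G χ (tfin (insert (c₀, e₀) T))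
                (fun o e => update f (some c₀, e₀) (f ((none : Option (Fin n)), e₀)) (o, e))
              then ∏ κ, BW p (f κ) else 0 := by
            refine Finset.sum_congr rfl fun f _ => ?_
            exact if_congr (Pt_transfer G χ T c₀ e₀ haT f) rfl rfl
        _ ≤ _ := hstep

/- ### endpoints -/

lemma Pt_empty (ω : Option (Fin n) → Sym2 (Fin n) → Bool) :
    Pt G χ (tfin (∅ : Finset (Fin n × Sym2 (Fin n)))) ω ↔
      HasChiHamCycle n (fun i => G i ⊔ graphOf (ω none)) χ := by
  unfold Pt
  have hfun : (fun i => G i ⊔ graphOf fun e => ω (srcOf (tfin ∅) i e) e) =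
      (fun i => G i ⊔ graphOf (ω none)) := by
    funext i
    have hsrc : ∀ e, srcOf (tfin (∅ : Finset (Fin n × Sym2 (Fin n)))) i e = none :=
      fun e => by simp [srcOf, tfin]
    simp only [hsrc]
  rw [hfun]

lemma Pt_univ (ω : Option (Fin n) → Sym2 (Fin n) → Bool) :
    Pt G χ (tfin (Finset.univ : Finset (Fin n × Sym2 (Fin n)))) ω ↔
      HasChiHamCycle n (fun i => G i ⊔ graphOf (ω (some i))) χ := by
  unfold Pt
  have hfun : (fun i => G i ⊔ graphOf fun e => ω (srcOf (tfin Finset.univ) i e) e) =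
      (fun i => G i ⊔ graphOf (ω (some i))) := by
    funext i
    have hsrc : ∀ e, srcOf (tfin (Finset.univ : Finset (Fin n × Sym2 (Fin n)))) i e = some i :=
      fun e => by simp [srcOf, tfin]
    simp only [hsrc]
  rw [hfun]

lemma sum_reindex (p : ℝ) (P : (Option (Fin n) → Sym2 (Fin n) → Bool) → Prop)
    [DecidablePred P] :
    (∑ ω : Option (Fin n) → Sym2 (Fin n) → Bool,
        if P ω then ∏ o, ∏ e, BW p (ω o e) else 0) =
      ∑ f : Option (Fin n) × Sym2 (Fin n) → Bool,
        if P (fun o e => f (o, e)) then ∏ κ, BW p (f κ) else 0 := by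
  rw [← Equiv.sum_comp (Equiv.curry (Option (Fin n)) (Sym2 (Fin n)) Bool)
    (fun ω => if P ω then ∏ o, ∏ e, BW p (ω o e) else 0)]
  refine Finset.sum_congr rfl fun f _ => ?_
  have h1 : (Equiv.curry (Option (Fin n)) (Sym2 (Fin n)) Bool) f = fun o e => f (o, e) := rfl
  rw [h1, Fintype.prod_prod_type]

end S9

/-- The random graphs `H_0, H_1, …, H_n` are modelled as the coordinates of one
outcome `ω : Option (Fin n) → Sym2 (Fin n) → Bool` of the product measure, with
`ω none` playing the role of `H_0` and `ω (some j)` that of `H_j`. -/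
theorem statement_9 (n : ℕ) (G : Fin n → SimpleGraph (Fin n)) (χ : Fin n → Fin n)
    (p' : ℝ) (hp0 : 0 ≤ p') (hp1 : p' ≤ 1) :
    erTupleMeasure (Option (Fin n)) n p'
        {ω | HasChiHamCycle n (fun i => G i ⊔ graphOf (ω none)) χ} ≤
      erTupleMeasure (Option (Fin n)) n p'
        {ω | HasChiHamCycle n (fun i => G i ⊔ graphOf (ω (some i))) χ} := by
  classical
  rw [S9.erTuple_apply, S9.erTuple_apply]
  have hL : (∑ ω : Option (Fin n) → Sym2 (Fin n) → Bool,
      if ω ∈ {ω | HasChiHamCycle n (fun i => G i ⊔ graphOf (ω none)) χ}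
      then ∏ o, ∏ e, S9.BW p' (ω o e) else 0) =
      S9.SumT G χ p' (S9.tfin (∅ : Finset (Fin n × Sym2 (Fin n)))) := by
    rw [S9.sum_reindex p' (fun ω => ω ∈ {ω | HasChiHamCycle n (fun i => G i ⊔ graphOf (ω none)) χ})]
    refine Finset.sum_congr rfl fun f _ => ?_
    exact if_congr ((S9.Pt_empty G χ (fun o e => f (o, e))).symm) rfl rfl
  have hR : (∑ ω : Option (Fin n) → Sym2 (Fin n) → Bool,
      if ω ∈ {ω | HasChiHamCycle n (fun i => G i ⊔ graphOf (ω (some i))) χ}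
      then ∏ o, ∏ e, S9.BW p' (ω o e) else 0) =
      S9.SumT G χ p' (S9.tfin (Finset.univ : Finset (Fin n × Sym2 (Fin n)))) := by
    rw [S9.sum_reindex p' (fun ω => ω ∈ {ω | HasChiHamCycle n (fun i => G i ⊔ graphOf (ω (some i))) χ})]
    refine Finset.sum_congr rfl fun f _ => ?_
    exact if_congr ((S9.Pt_univ G χ (fun o e => f (o, e))).symm) rfl rfl
  rw [hL, hR]
  exact S9.chain G χ p' Finset.univ
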